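/- Let X = [x_min, x_max] ⊂ ℝ with −∞ < x_min < x_max < ∞, let g: X² → [−1,1] be a measurable symmetric-switch function, and let X and Y be independent X-valued random variables such that X first-order stochastically dominates Y. Then E[ g(Y, X) ] ≥ 0. -/

import Mathlib

open MeasureTheory ProbabilityTheory Set

set_option linter.unusedVariables false

lemma aux_Iio {la nu : Measure ℝ} [IsProbabilityMeasure la] [IsProbabilityMeasure nu]
    (hcdf : ∀ z : ℝ, nu (Iic z) ≤ la (Iic z)) (c : ℝ) : nu (Iio c) ≤ la (Iio c) := by
  have hU : Iio c = ⋃ n : ℕ, Iic (c - 1/(n+1)) := by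
    ext x
    simp only [mem_Iio, mem_iUnion, mem_Iic]
    constructor
    · intro hx
      obtain ⟨n, hn⟩ := exists_nat_one_div_lt (sub_pos.mpr hx)
      exact ⟨n, by linarith [hn]⟩
    · rintro ⟨n, hn⟩
      have : (0:ℝ) < 1/(n+1) := by positivity
      linarith
  have hdir : ∀ (ρ : Measure ℝ), ρ (Iio c) = ⨆ n : ℕ, ρ (Iic (c - 1/(n+1))) := by
    intro ρ
    rw [hU]
    apply Directed.measure_iUnion
    intro m n
    rcases le_total m n with h | h
    · refine ⟨n, Iic_subset_Iic.mpr ?_, subset_rfl⟩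
      have : (m:ℝ) + 1 ≤ (n:ℝ) + 1 := by exact_mod_cast Nat.succ_le_succ h
      gcongr
    · refine ⟨m, subset_rfl, Iic_subset_Iic.mpr ?_⟩
      have : (n:ℝ) + 1 ≤ (m:ℝ) + 1 := by exact_mod_cast Nat.succ_le_succ h
      gcongr
  rw [hdir nu, hdir la]
  exact iSup_mono fun n => hcdf _

lemma upperSet_measure_le {la nu : Measure ℝ} [IsProbabilityMeasure la] [IsProbabilityMeasure nu]
    (hcdf : ∀ z : ℝ, nu (Iic z) ≤ la (Iic z)) {S : Set ℝ} (hS : IsUpperSet S) :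
    la S ≤ nu S := by
  rcases S.eq_empty_or_nonempty with rfl | hne
  · simp
  by_cases hbdd : BddBelow S
  · set c := sInf S with hc
    have hIoi : Ioi c ⊆ S := fun x hx => by
      obtain ⟨s, hsS, hs⟩ := Real.lt_sInf_add_pos hne (sub_pos.mpr hx)
      exact hS (by linarith : s ≤ x) hsS
    have hIci : S ⊆ Ici c := fun x hx => csInf_le hbdd hx
    by_cases hcS : c ∈ S
    · have hSeq : S = Ici c := Subset.antisymm hIci (fun x hx => hS hx hcS)
      rw [hSeq, ← compl_Iio,
        prob_compl_eq_one_sub measurableSet_Iio, prob_compl_eq_one_sub measurableSet_Iio]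
      exact tsub_le_tsub_left (aux_Iio hcdf c) 1
    · have hSeq : S = Ioi c := by
        apply Subset.antisymm _ hIoi
        intro x hx
        rcases lt_or_eq_of_le (show c ≤ x from hIci hx) with h | h
        · exact h
        · exact absurd (h ▸ hx) hcS
      rw [hSeq, ← compl_Iic,
        prob_compl_eq_one_sub measurableSet_Iic, prob_compl_eq_one_sub measurableSet_Iic]
      exact tsub_le_tsub_left (hcdf c) 1
  · have : S = univ := by
      ext x
      simp only [mem_univ, iff_true]
      obtain ⟨s, hsS, hs⟩ := not_bddBelow_iff.mp hbdd x
      exact hS hs.le hsS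
    simp [this]

lemma fosd_integral {la nu : Measure ℝ} [IsProbabilityMeasure la] [IsProbabilityMeasure nu]
    (hcdf : ∀ z : ℝ, nu (Iic z) ≤ la (Iic z)) (h : ℝ → ℝ) (hmono : Monotone h)
    (hmeas : Measurable h) (hlb : ∀ x, -1 ≤ h x) (hub : ∀ x, h x ≤ 1) :
    ∫ x, h x ∂la ≤ ∫ x, h x ∂nu := by
  set f : ℝ → ℝ := fun x => h x + 1 with hf
  have hf_nn : ∀ x, 0 ≤ f x := fun x => by simp only [hf]; linarith [hlb x]
  have hf_meas : Measurable f := hmeas.add_const 1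
  have key : ∀ (ρ : Measure ℝ), IsProbabilityMeasure ρ →
      ∫ x, f x ∂ρ = (∫⁻ t in Ioi 0, ρ {a | t < f a}).toReal := by
    intro ρ hρ
    rw [integral_eq_lintegral_of_nonneg_ae (Filter.Eventually.of_forall hf_nn)
      hf_meas.aestronglyMeasurable,
      lintegral_eq_lintegral_meas_lt ρ (Filter.Eventually.of_forall hf_nn) hf_meas.aemeasurable]
  have hfi : ∀ (ρ : Measure ℝ), IsProbabilityMeasure ρ → Integrable f ρ := by
    intro ρ hρ
    refine Integrable.mono' (integrable_const 2) hf_meas.aestronglyMeasurable ?_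
    refine Filter.Eventually.of_forall fun x => ?_
    rw [Real.norm_eq_abs, abs_le]
    refine ⟨by simp only [hf]; linarith [hlb x], by simp only [hf]; linarith [hub x]⟩
  have hhi : ∀ (ρ : Measure ℝ), IsProbabilityMeasure ρ → Integrable h ρ := by
    intro ρ hρ
    have := (hfi ρ hρ).sub (integrable_const 1)
    have he : h = fun x => f x - 1 := by funext x; simp [hf]
    rw [he]
    exact this
  have hset : ∀ t : ℝ, la {a | t < f a} ≤ nu {a | t < f a} := by
    intro t
    apply upperSet_measure_le hcdf
    intro x x' hxx' hx
    simp only [mem_setOf_eq, hf] at hx ⊢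
    linarith [hmono hxx']
  have hlin : (∫⁻ t in Ioi 0, la {a | t < f a}) ≤ ∫⁻ t in Ioi 0, nu {a | t < f a} :=
    lintegral_mono fun t => hset t
  have hfin : (∫⁻ t in Ioi 0, nu {a | t < f a}) ≠ ⊤ := by
    rw [← lintegral_eq_lintegral_meas_lt nu (Filter.Eventually.of_forall hf_nn) hf_meas.aemeasurable]
    refine ne_of_lt (lt_of_le_of_lt (lintegral_mono fun x => ?_) (by simp : (∫⁻ _ : ℝ, (2:ENNReal) ∂nu) < ⊤))
    exact ENNReal.ofReal_le_of_le_toReal (by simp only [hf]; norm_num; linarith [hub x])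
  have hff : ∫ x, f x ∂la ≤ ∫ x, f x ∂nu := by
    rw [key la inferInstance, key nu inferInstance]
    exact ENNReal.toReal_mono hfin hlin
  have e1 : ∫ x, f x ∂la = ∫ x, h x ∂la + 1 := by
    simp only [hf]
    rw [integral_add (hhi la inferInstance) (integrable_const 1)]
    simp
  have e2 : ∫ x, f x ∂nu = ∫ x, h x ∂nu + 1 := by
    simp only [hf]
    rw [integral_add (hhi nu inferInstance) (integrable_const 1)]
    simp
  linarith [hff, e1.symm.le, e2.le]


/-- If `g` is a measurable symmetric-switch function on `[x_min, x_max]²` with values in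
`[−1,1]`, and `X`, `Y` are independent `[x_min, x_max]`-valued random variables such that
`X` first-order stochastically dominates `Y`, then `E[g(Y, X)] ≥ 0`. -/
theorem stmt9 {Ω : Type*} [MeasurableSpace Ω] {μ : Measure Ω} [IsProbabilityMeasure μ]
    (xmin xmax : ℝ) (hx : xmin < xmax) (g : ℝ → ℝ → ℝ)
    (hg_meas : Measurable (Function.uncurry g))
    (hg_range : ∀ x₁ ∈ Set.Icc xmin xmax, ∀ x₂ ∈ Set.Icc xmin xmax,
      g x₁ x₂ ∈ Set.Icc (-1 : ℝ) 1)
    (hg_anti : ∀ x₁ ∈ Set.Icc xmin xmax, ∀ x₂ ∈ Set.Icc xmin xmax,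
      g x₁ x₂ = -g x₂ x₁)
    (hg_mono : ∀ x₁ ∈ Set.Icc xmin xmax, ∀ x₂ ∈ Set.Icc xmin xmax,
      ∀ x₃ ∈ Set.Icc xmin xmax, x₂ ≤ x₃ → g x₁ x₂ ≤ g x₁ x₃)
    (hg_pos : ∀ x₁ ∈ Set.Icc xmin xmax, ∀ x₂ ∈ Set.Icc xmin xmax,
      x₁ < x₂ → 0 ≤ g x₁ x₂)
    (X Y : Ω → ℝ) (hX_meas : Measurable X) (hY_meas : Measurable Y)
    (hX_mem : ∀ ω, X ω ∈ Set.Icc xmin xmax) (hY_mem : ∀ ω, Y ω ∈ Set.Icc xmin xmax)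
    (hindep : IndepFun X Y μ)
    (hfosd : ∀ z : ℝ, μ {ω | X ω ≤ z} ≤ μ {ω | Y ω ≤ z}) :
    0 ≤ ∫ ω, g (Y ω) (X ω) ∂μ := by
  -- clamp
  set cl : ℝ → ℝ := fun x => max xmin (min x xmax) with hcl
  have hcl_mono : Monotone cl := fun a b hab => by
    simp only [hcl]
    exact max_le_max le_rfl (min_le_min hab le_rfl)
  have hcl_cont : Continuous cl := continuous_const.max ((continuous_id.min continuous_const))
  have hcl_mem : ∀ x, cl x ∈ Icc xmin xmax := fun x =>
    ⟨le_max_left _ _, max_le (le_of_lt hx) (min_le_right _ _)⟩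
  have hcl_id : ∀ x ∈ Icc xmin xmax, cl x = x := fun x hxm => by
    simp only [hcl]
    rw [min_eq_left hxm.2, max_eq_right hxm.1]
  set G : ℝ → ℝ → ℝ := fun y x => g (cl y) (cl x) with hG
  have hG_meas : Measurable (Function.uncurry G) := by
    have : Function.uncurry G = Function.uncurry g ∘ (fun p : ℝ × ℝ => (cl p.1, cl p.2)) := rfl
    rw [this]
    exact hg_meas.comp ((hcl_cont.measurable.comp measurable_fst).prodMk
      (hcl_cont.measurable.comp measurable_snd))
  have hG_range : ∀ y x, G y x ∈ Icc (-1:ℝ) 1 := fun y x =>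
    hg_range _ (hcl_mem y) _ (hcl_mem x)
  have hG_anti : ∀ y x, G y x = -G x y := fun y x =>
    hg_anti _ (hcl_mem y) _ (hcl_mem x)
  have hG_mono : ∀ y, Monotone (G y) := fun y a b hab =>
    hg_mono _ (hcl_mem y) _ (hcl_mem a) _ (hcl_mem b) (hcl_mono hab)
  -- laws
  set la : Measure ℝ := μ.map Y with hla
  set nu : Measure ℝ := μ.map X with hnu
  have hla_prob : IsProbabilityMeasure la := Measure.isProbabilityMeasure_map hY_meas.aemeasurable
  have hnu_prob : IsProbabilityMeasure nu := Measure.isProbabilityMeasure_map hX_meas.aemeasurable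
  have hcdf : ∀ z : ℝ, nu (Iic z) ≤ la (Iic z) := by
    intro z
    rw [hnu, hla, Measure.map_apply hX_meas measurableSet_Iic,
      Measure.map_apply hY_meas measurableSet_Iic]
    exact hfosd z
  -- integrability helps
  have hGbdd : ∀ (ρ : Measure ℝ) (_ : IsProbabilityMeasure ρ) (σ : Measure ℝ)
      (_ : IsProbabilityMeasure σ), Integrable (Function.uncurry G) (ρ.prod σ) := by
    intro ρ hρ σ hσ
    refine Integrable.mono' (integrable_const 1) hG_meas.aestronglyMeasurable
      (Filter.Eventually.of_forall fun p => ?_)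
    rw [Real.norm_eq_abs, abs_le]
    exact ⟨(hG_range p.1 p.2).1, (hG_range p.1 p.2).2⟩
  have hGy_meas : ∀ y : ℝ, Measurable (G y) := fun y =>
    hG_meas.comp (measurable_const.prodMk measurable_id)
  -- rewrite the goal through laws
  have hmap : μ.map (fun ω => (Y ω, X ω)) = la.prod nu :=
    (indepFun_iff_map_prod_eq_prod_map_map hY_meas.aemeasurable hX_meas.aemeasurable).mp
      hindep.symm
  have step1 : ∫ ω, g (Y ω) (X ω) ∂μ = ∫ p : ℝ × ℝ, G p.1 p.2 ∂(la.prod nu) := by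
    rw [← hmap]
    rw [integral_map (f := fun p : ℝ × ℝ => G p.1 p.2)
      ((hY_meas.prodMk hX_meas).aemeasurable) hG_meas.aestronglyMeasurable]
    refine integral_congr_ae (Filter.Eventually.of_forall fun ω => ?_)
    simp only [hG, hcl_id _ (hY_mem ω), hcl_id _ (hX_mem ω)]
  rw [step1]
  -- antisymmetry: integral over la.prod la is zero
  have hzero : ∫ p : ℝ × ℝ, G p.1 p.2 ∂(la.prod la) = 0 := by
    have hswap : ∫ p : ℝ × ℝ, G p.1 p.2 ∂(la.prod la)
        = ∫ p : ℝ × ℝ, G p.2 p.1 ∂(la.prod la) := by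
      conv_lhs => rw [← Measure.prod_swap (μ := la) (ν := la)]
      rw [integral_map (f := fun p : ℝ × ℝ => G p.1 p.2) measurable_swap.aemeasurable
        (by rw [Measure.prod_swap]; exact hG_meas.aestronglyMeasurable)]
      rfl
    have hneg : ∫ p : ℝ × ℝ, G p.2 p.1 ∂(la.prod la)
        = - ∫ p : ℝ × ℝ, G p.1 p.2 ∂(la.prod la) := by
      rw [← integral_neg]
      exact integral_congr_ae (Filter.Eventually.of_forall fun p => (hG_anti p.2 p.1).trans rfl)
    linarith [hswap, hneg]
  -- monotone comparison
  have hinner : ∀ y : ℝ, ∫ x, G y x ∂la ≤ ∫ x, G y x ∂nu := fun y =>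
    fosd_integral hcdf (G y) (hG_mono y) (hGy_meas y)
      (fun x => (hG_range y x).1) (fun x => (hG_range y x).2)
  have hfub1 : ∫ p : ℝ × ℝ, G p.1 p.2 ∂(la.prod nu) = ∫ y, ∫ x, G y x ∂nu ∂la :=
    integral_prod _ (hGbdd la hla_prob nu hnu_prob)
  have hfub2 : ∫ p : ℝ × ℝ, G p.1 p.2 ∂(la.prod la) = ∫ y, ∫ x, G y x ∂la ∂la :=
    integral_prod _ (hGbdd la hla_prob la hla_prob)
  have hmono_int : ∫ y, ∫ x, G y x ∂la ∂la ≤ ∫ y, ∫ x, G y x ∂nu ∂la :=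
    integral_mono ((hGbdd la hla_prob la hla_prob).integral_prod_left)
      ((hGbdd la hla_prob nu hnu_prob).integral_prod_left) hinner
  calc (0:ℝ) = ∫ p : ℝ × ℝ, G p.1 p.2 ∂(la.prod la) := hzero.symm
    _ = ∫ y, ∫ x, G y x ∂la ∂la := hfub2
    _ ≤ ∫ y, ∫ x, G y x ∂nu ∂la := hmono_int
    _ = ∫ p : ℝ × ℝ, G p.1 p.2 ∂(la.prod nu) := hfub1.symm
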